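/- Let G be a multigraph, e ∈ E(G) with χ'(G−e) ≤ k and χ'(G) = k+1 where k ≥ Δ(G)+1, and suppose there exists a proper k-edge-coloring φ of G−e with respect to which V(G) is elementary. Then χ'(G) = ⌈χ'_f(G)⌉. -/

import Mathlib

/-- A multigraph on vertex type `V` with edge type `E`: each edge has two distinct
endpoints (no loops), possibly with parallel edges. -/
structure Multigraph (V : Type*) (E : Type*) where
  ends : E → Sym2 V
  not_loop : ∀ e, ¬ (ends e).IsDiag

namespace Multigraph

variable {V E : Type*}

/-- Two edges are adjacent if they are distinct and share an endpoint. -/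
def Adjacent (G : Multigraph V E) (f g : E) : Prop :=
  f ≠ g ∧ ∃ v, v ∈ G.ends f ∧ v ∈ G.ends g

/-- A proper `k`-edge-coloring of the subgraph of `G` with edge set `F`. -/
def IsProperColoringOn (G : Multigraph V E) (F : Set E) (k : ℕ) (φ : E → Fin k) : Prop :=
  ∀ f ∈ F, ∀ g ∈ F, G.Adjacent f g → φ f ≠ φ g

/-- A proper `k`-edge-coloring of `G`. -/
def IsProperColoring (G : Multigraph V E) (k : ℕ) (φ : E → Fin k) : Prop :=
  G.IsProperColoringOn Set.univ k φ

/-- A proper `k`-edge-coloring of `G - e`. -/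
def IsProperColoringOff (G : Multigraph V E) (e : E) (k : ℕ) (φ : E → Fin k) : Prop :=
  G.IsProperColoringOn {e}ᶜ k φ

/-- The chromatic index of the subgraph with edge set `F`. -/
noncomputable def chromaticIndexOn (G : Multigraph V E) (F : Set E) : ℕ :=
  sInf {k | ∃ φ : E → Fin k, G.IsProperColoringOn F k φ}

/-- The chromatic index `χ'(G)`. -/
noncomputable def chromaticIndex (G : Multigraph V E) : ℕ :=
  G.chromaticIndexOn Set.univ

/-- The degree of a vertex. -/
noncomputable def degree (G : Multigraph V E) (v : V) : ℕ :=
  {e | v ∈ G.ends e}.ncard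

/-- The maximum degree `Δ(G)`. -/
noncomputable def maxDegree (G : Multigraph V E) : ℕ :=
  sSup (Set.range G.degree)

/-- The multiplicity `μ(G)`: the maximum number of parallel edges between two vertices. -/
noncomputable def multiplicity (G : Multigraph V E) : ℕ :=
  sSup (Set.range (fun p : V × V => {e | G.ends e = s(p.1, p.2)}.ncard))

/-- A set of edges is a matching if no two distinct members share a vertex. -/
def IsMatching (G : Multigraph V E) (M : Finset E) : Prop :=
  ∀ f ∈ M, ∀ g ∈ M, f ≠ g → ¬ ∃ v, v ∈ G.ends f ∧ v ∈ G.ends g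

/-- A fractional edge coloring: a nonnegative weighting of matchings such that every
edge receives total weight exactly `1`. -/
def IsFracColoring [Fintype E] [DecidableEq E] (G : Multigraph V E) (w : Finset E → ℝ) : Prop :=
  (∀ M, 0 ≤ w M) ∧ (∀ M, w M ≠ 0 → G.IsMatching M) ∧
    (∀ e : E, ∑ M : Finset E, (if e ∈ M then w M else 0) = 1)

/-- The fractional chromatic index `χ'_f(G)`. -/
noncomputable def fracChromaticIndex [Fintype E] [DecidableEq E] (G : Multigraph V E) : ℝ :=
  sInf {x : ℝ | ∃ w, G.IsFracColoring w ∧ ∑ M : Finset E, w M = x}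

/-- Color `c` is missing at `v` under the coloring `φ` of `G - e`. -/
def MissingAt (G : Multigraph V E) (e : E) {k : ℕ} (φ : E → Fin k) (v : V) (c : Fin k) : Prop :=
  ∀ f, f ≠ e → v ∈ G.ends f → φ f ≠ c

/-- `X` is elementary w.r.t. `φ`: the missing color sets of distinct vertices of `X`
are pairwise disjoint. -/
def IsElementary (G : Multigraph V E) (e : E) {k : ℕ} (φ : E → Fin k) (X : Set V) : Prop :=
  ∀ x ∈ X, ∀ y ∈ X, x ≠ y → ∀ c, G.MissingAt e φ x c → ¬ G.MissingAt e φ y c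

/-- An edge with exactly one end in `X`. -/
def IsBoundaryEdge (G : Multigraph V E) (X : Set V) (f : E) : Prop :=
  (∃ v ∈ G.ends f, v ∈ X) ∧ (∃ v ∈ G.ends f, v ∉ X)

/-- `X` is closed w.r.t. `φ`: no color missing at a vertex of `X` appears on a
boundary edge of `X`. -/
def IsClosed (G : Multigraph V E) (e : E) {k : ℕ} (φ : E → Fin k) (X : Set V) : Prop :=
  ∀ f, f ≠ e → G.IsBoundaryEdge X f → ∀ u ∈ X, ¬ G.MissingAt e φ u (φ f)

/-- `X` is strongly closed: closed, and every color appears on at most one boundary edge. -/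
def IsStronglyClosed (G : Multigraph V E) (e : E) {k : ℕ} (φ : E → Fin k) (X : Set V) : Prop :=
  G.IsClosed e φ X ∧
    ∀ f g, f ≠ e → g ≠ e → G.IsBoundaryEdge X f → G.IsBoundaryEdge X g →
      φ f = φ g → f = g

/-- The vertex set spanned by the first `j` edges of the sequence `t`. -/
def TSet (G : Multigraph V E) (t : ℕ → E) (j : ℕ) : Set V :=
  {v | ∃ i < j, v ∈ G.ends (t i)}

/-- `t 0, …, t (p-1)` is a Tashkinov tree of `(G, e, φ)`: it starts with `e`, and each
subsequent edge is a boundary edge of the tree built so far whose color is missing at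
some vertex of that tree. -/
def IsTashkinov (G : Multigraph V E) (e : E) {k : ℕ} (φ : E → Fin k) (p : ℕ) (t : ℕ → E) : Prop :=
  0 < p ∧ t 0 = e ∧
    ∀ i, 1 ≤ i → i < p →
      t i ≠ e ∧ G.IsBoundaryEdge (G.TSet t i) (t i) ∧
        ∃ u ∈ G.TSet t i, G.MissingAt e φ u (φ (t i))

/-- The set of colors used on the (colored) edges of the tree. -/
def usedColors (G : Multigraph V E) (e : E) {k : ℕ} (φ : E → Fin k) (p : ℕ) (t : ℕ → E) :
    Set (Fin k) :=
  {c | ∃ i < p, t i ≠ e ∧ φ (t i) = c}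

/-- The free colors of the tree: colors missing at some vertex of the tree and not
used on any edge of the tree. -/
def freeColors (G : Multigraph V E) (e : E) {k : ℕ} (φ : E → Fin k) (p : ℕ) (t : ℕ → E) :
    Set (Fin k) :=
  {c | (∃ u ∈ G.TSet t p, G.MissingAt e φ u c) ∧ c ∉ G.usedColors e φ p t}

/-- The Tashkinov tree `t` is `e`-maximal: no Tashkinov tree of `(G, e, φ*)`, for any
proper `k`-edge-coloring `φ*` of `G - e`, properly contains it. -/
def IsEMaximal (G : Multigraph V E) (e : E) (k : ℕ) (p : ℕ) (t : ℕ → E) : Prop :=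
  ¬ ∃ (φ' : E → Fin k) (p' : ℕ) (t' : ℕ → E),
      G.IsProperColoringOff e k φ' ∧ G.IsTashkinov e φ' p' t' ∧
      {f | ∃ i < p, t i = f} ⊂ {f | ∃ j < p', t' j = f}

/-- `t` is a balanced Tashkinov tree with trunk of `h` vertices: the first `h - 1`
edges form a path whose first edge is `e` and whose colored edges alternate between a
color `α` missing at one end of `e` and a color `β` missing at the other end, and the
remaining edges are added in pairs with equal colors. -/
def IsBalanced (G : Multigraph V E) (e : E) {k : ℕ} (φ : E → Fin k) (p : ℕ) (t : ℕ → E)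
    (h : ℕ) : Prop :=
  2 ≤ h ∧ h ≤ p + 1 ∧ (p - (h - 1)) % 2 = 0 ∧
  (∃ (v : ℕ → V) (α β : Fin k),
    (∀ i j, i < h → j < h → v i = v j → i = j) ∧
    (∀ i, i < h - 1 → G.ends (t i) = s(v i, v (i + 1))) ∧
    G.MissingAt e φ (v 1) α ∧ G.MissingAt e φ (v 0) β ∧
    (∀ i, 1 ≤ i → i < h - 1 → φ (t i) = if i % 2 = 1 then α else β)) ∧
  (∀ j, h - 1 ≤ j → j < p → (j - (h - 1)) % 2 = 0 →
    j + 1 < p ∧ φ (t j) = φ (t (j + 1)))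

open Finset in
lemma exists_ends (G : Multigraph V E) (f : E) : ∃ a b : V, a ≠ b ∧ G.ends f = s(a, b) := by
  obtain ⟨⟨a, b⟩, h⟩ := Quot.exists_rep (G.ends f)
  refine ⟨a, b, ?_, h.symm⟩
  intro hab
  exact G.not_loop f (by rw [← h, hab]; exact Sym2.mk_isDiag_iff.mpr rfl)

open Finset in
lemma IsMatching.two_mul_card_le [Fintype V] (G : Multigraph V E) {M : Finset E}
    (hM : G.IsMatching M) : 2 * M.card ≤ Fintype.card V := by
  classical
  choose A B hAB hends using fun f => G.exists_ends f
  have hmem : ∀ f (v : V), v ∈ G.ends f ↔ v ∈ ({A f, B f} : Finset V) := by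
    intro f v; rw [hends f]; simp [Sym2.mem_iff]
  have hdisj : ∀ f ∈ M, ∀ g ∈ M, f ≠ g →
      Disjoint ({A f, B f} : Finset V) ({A g, B g} : Finset V) := by
    intro f hf g hg hfg
    rw [Finset.disjoint_left]
    intro v hvf hvg
    exact hM f hf g hg hfg ⟨v, (hmem f v).mpr hvf, (hmem g v).mpr hvg⟩
  calc 2 * M.card = (M.biUnion (fun f => ({A f, B f} : Finset V))).card := by
        rw [Finset.card_biUnion hdisj]
        simp [Finset.card_pair, hAB, mul_comm]
    _ ≤ Fintype.card V := Finset.card_le_univ _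

open Finset in
lemma frac_of_proper [Fintype E] [DecidableEq E] (G : Multigraph V E)
    {K : ℕ} {ψ : E → Fin K} (hψ : G.IsProperColoring K ψ) :
    ∃ w, G.IsFracColoring w ∧ ∑ M : Finset E, w M = K := by
  classical
  set classF : Fin K → Finset E := fun c => univ.filter (fun f => ψ f = c) with hclassF
  refine ⟨fun M => ((univ.filter (fun c => classF c = M)).card : ℝ), ⟨fun M => by positivity, ?_, ?_⟩, ?_⟩
  · intro M hw
    have : (univ.filter (fun c => classF c = M)).Nonempty := by
      rw [← Finset.card_pos]
      by_contra h
      push_neg at h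
      simp [Nat.le_zero.mp h] at hw
    obtain ⟨c, hc⟩ := this
    have hMc : classF c = M := (Finset.mem_filter.mp hc).2
    intro f hf g hg hfg hv
    have hf' : ψ f = c := by
      have := hMc ▸ hf; simpa [classF] using this
    have hg' : ψ g = c := by
      have := hMc ▸ hg; simpa [classF] using this
    exact hψ f trivial g trivial ⟨hfg, hv⟩ (hf'.trans hg'.symm)
  · intro f
    have key : (univ.filter (fun c => f ∈ classF c)) = {ψ f} := by
      ext c; simp [classF, eq_comm]
    have fiber := Finset.card_eq_sum_card_fiberwise
      (f := classF) (s := univ.filter (fun c => f ∈ classF c)) (t := univ)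
      (fun c _ => mem_univ _)
    have per : ∀ M : Finset E,
        ((univ.filter (fun c => f ∈ classF c)).filter (fun c => classF c = M)).card
          = if f ∈ M then (univ.filter (fun c => classF c = M)).card else 0 := by
      intro M
      rw [Finset.filter_filter]
      by_cases hfM : f ∈ M
      · simp only [hfM, if_true]
        congr 1
        apply Finset.filter_congr
        intro c _
        constructor
        · rintro ⟨-, h⟩; exact h
        · intro h; exact ⟨h ▸ hfM, h⟩
      · simp only [hfM, if_false, Finset.card_eq_zero]
        rw [Finset.filter_eq_empty_iff]
        rintro c - ⟨hmem, heq⟩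
        exact hfM (heq ▸ hmem)
    have : (1 : ℕ) = ∑ M : Finset E, if f ∈ M then (univ.filter (fun c => classF c = M)).card else 0 := by
      calc (1 : ℕ) = (univ.filter (fun c => f ∈ classF c)).card := by rw [key]; simp
        _ = _ := by rw [fiber]; exact Finset.sum_congr rfl (fun M _ => per M)
    have := congrArg (Nat.cast : ℕ → ℝ) this
    push_cast at this
    rw [← this]
  · have := Finset.card_eq_sum_card_fiberwise
      (f := classF) (s := (univ : Finset (Fin K))) (t := univ) (fun c _ => mem_univ _)
    have := congrArg (Nat.cast : ℕ → ℝ) this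
    push_cast at this
    rw [← this]
    simp

end Multigraph

open Multigraph in
/-- if `χ'(G - e) ≤ k`, `χ'(G) = k + 1 ≥ Δ + 2`, and `V(G)` is elementary
w.r.t. some proper `k`-edge-coloring of `G - e`, then `χ'(G) = ⌈χ'_f(G)⌉`. -/
theorem elementary_whole_implies_goldberg
    {V E : Type*} [Fintype V] [Fintype E] [DecidableEq E] (G : Multigraph V E)
    (e : E) (k : ℕ)
    (hke : G.chromaticIndexOn ({e}ᶜ : Set E) ≤ k)
    (hchi : G.chromaticIndex = k + 1)
    (hk : G.maxDegree + 1 ≤ k)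
    (hel : ∃ φ : E → Fin k, G.IsProperColoringOff e k φ ∧
      G.IsElementary e φ (Set.univ : Set V)) :
    (G.chromaticIndex : ℤ) = ⌈G.fracChromaticIndex⌉ := by
  classical
  obtain ⟨φ, hφ, helem⟩ := hel
  set m := Fintype.card E with hm
  set n := Fintype.card V with hn
  -- Step 1: there is a proper (k+1)-edge-coloring of G
  have hS : {K : ℕ | ∃ ψ : E → Fin K, G.IsProperColoringOn Set.univ K ψ}.Nonempty := by
    refine ⟨m, fun f => Fintype.equivFin E f, ?_⟩
    intro f _ g _ hadj heq
    exact hadj.1 ((Fintype.equivFin E).injective heq)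
  have hmem : G.chromaticIndex ∈
      {K : ℕ | ∃ ψ : E → Fin K, G.IsProperColoringOn Set.univ K ψ} := Nat.sInf_mem hS
  rw [hchi] at hmem
  obtain ⟨ψ, hψ⟩ := hmem
  -- Step 2: fractional chromatic index ≤ k + 1
  obtain ⟨w0, hw0, hsum0⟩ := G.frac_of_proper hψ
  set T : Set ℝ := {x : ℝ | ∃ w, G.IsFracColoring w ∧ ∑ M : Finset E, w M = x} with hT
  have hTmem : ((k : ℝ) + 1) ∈ T := ⟨w0, hw0, by rw [hsum0]; push_cast; ring⟩
  have hTne : T.Nonempty := ⟨_, hTmem⟩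
  have hTbdd : BddBelow T := by
    refine ⟨0, ?_⟩
    rintro x ⟨w, hw, rfl⟩
    exact Finset.sum_nonneg fun M _ => hw.1 M
  have hub : G.fracChromaticIndex ≤ (k : ℝ) + 1 := csInf_le hTbdd hTmem
  -- endpoints
  choose A B hAB hends using fun f => G.exists_ends f
  have hmemends : ∀ f (v : V), v ∈ G.ends f ↔ v = A f ∨ v = B f := by
    intro f v; rw [hends f]; exact Sym2.mem_iff
  -- Step 3: counting. For each color c, the class Mc c
  set Mc : Fin k → Finset E := fun c => Finset.univ.filter (fun f => f ≠ e ∧ φ f = c) with hMc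
  have hMatch : ∀ c : Fin k, ∀ f ∈ Mc c, ∀ g ∈ Mc c, f ≠ g →
      ¬ ∃ v, v ∈ G.ends f ∧ v ∈ G.ends g := by
    intro c f hf g hg hfg ⟨v, hvf, hvg⟩
    simp only [hMc, Finset.mem_filter] at hf hg
    exact hφ f hf.2.1 g hg.2.1 ⟨hfg, v, hvf, hvg⟩ (hf.2.2.trans hg.2.2.symm)
  set miss : Fin k → Finset V := fun c => Finset.univ.filter (fun v => G.MissingAt e φ v c)
    with hmiss
  have hcov : ∀ c : Fin k, ∀ v : V,
      v ∈ (Mc c).biUnion (fun f => ({A f, B f} : Finset V)) ↔ v ∉ miss c := by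
    intro c v
    simp only [hmiss, Finset.mem_biUnion, hMc, Finset.mem_filter, Finset.mem_univ, true_and,
      Finset.mem_insert, Finset.mem_singleton, MissingAt]
    constructor
    · rintro ⟨f, ⟨hfe, hfc⟩, hv⟩ hmis
      have hm' : G.MissingAt e φ v c := ((@Finset.mem_filter _ (fun a => G.MissingAt e φ a c) (fun _ => Classical.propDecidable _) _ _).mp hmis).2
      exact hm' f hfe ((hmemends f v).mpr hv) hfc
    · intro h
      have h' : ¬ G.MissingAt e φ v c := fun hm => h ((@Finset.mem_filter _ (fun a => G.MissingAt e φ a c) (fun _ => Classical.propDecidable _) _ _).mpr ⟨Finset.mem_univ _, hm⟩)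
      unfold MissingAt at h'
      push_neg at h'
      obtain ⟨f, hfe, hvf, hfc⟩ := h'
      exact ⟨f, ⟨hfe, hfc⟩, (hmemends f v).mp hvf⟩
  have hcovcard : ∀ c : Fin k,
      ((Mc c).biUnion (fun f => ({A f, B f} : Finset V))).card = 2 * (Mc c).card := by
    intro c
    rw [Finset.card_biUnion]
    · rw [Finset.sum_congr rfl (fun f _ => Finset.card_pair (hAB f))]
      simp [mul_comm]
    · intro f hf g hg hfg
      show Disjoint ({A f, B f} : Finset V) ({A g, B g} : Finset V)
      rw [Finset.disjoint_left]
      intro v hvf hvg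
      refine hMatch c f hf g hg hfg ⟨v, ?_, ?_⟩
      · rw [hmemends]; simpa using hvf
      · rw [hmemends]; simpa using hvg
  have hmissle : ∀ c : Fin k, (miss c).card ≤ 1 := by
    intro c
    rw [Finset.card_le_one]
    intro x hx y hy
    by_contra hxy
    simp only [hmiss, Finset.mem_filter] at hx hy
    exact helem x trivial y trivial hxy c hx.2 hy.2
  have hsplit : ∀ c : Fin k, n = 2 * (Mc c).card + (miss c).card := by
    intro c
    have : miss c = Finset.univ \ (Mc c).biUnion (fun f => ({A f, B f} : Finset V)) := by
      ext v
      simp only [Finset.mem_sdiff, Finset.mem_univ, true_and]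
      rw [hcov c v]
      exact not_not.symm
    have hsub := Finset.card_sdiff_add_card_eq_card
      (Finset.subset_univ ((Mc c).biUnion (fun f => ({A f, B f} : Finset V))))
    rw [← this, hcovcard c, Finset.card_univ, ← hn] at hsub
    omega
  -- every vertex misses some color
  have hmissex : ∀ v : V, ∃ c : Fin k, G.MissingAt e φ v c := by
    intro v
    set used : Finset (Fin k) := (Finset.univ.filter (fun f => f ≠ e ∧ v ∈ G.ends f)).image φ
      with hused
    have hdeg : G.degree v = (Finset.univ.filter (fun f => v ∈ G.ends f)).card := by
      rw [degree, Set.ncard_eq_toFinset_card']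
      congr 1
      ext f; simp
    have hbddD : BddAbove (Set.range G.degree) := by
      refine ⟨m, ?_⟩
      rintro x ⟨u, rfl⟩
      calc G.degree u = (Finset.univ.filter (fun f => u ∈ G.ends f)).card := by
            rw [degree, Set.ncard_eq_toFinset_card']; congr 1; ext f; simp
        _ ≤ Finset.univ.card := Finset.card_le_univ _
        _ = m := by rw [Finset.card_univ]
    have hdegle : G.degree v ≤ G.maxDegree := le_csSup hbddD ⟨v, rfl⟩
    have husedlt : used.card < k := by
      have h1 : used.card ≤ (Finset.univ.filter (fun f => f ≠ e ∧ v ∈ G.ends f)).card :=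
        Finset.card_image_le
      have h2 : (Finset.univ.filter (fun f => f ≠ e ∧ v ∈ G.ends f)).card
          ≤ (Finset.univ.filter (fun f => v ∈ G.ends f)).card := by
        apply Finset.card_le_card
        intro f hf
        simp only [Finset.mem_filter] at hf ⊢
        exact ⟨hf.1, hf.2.2⟩
      omega
    have : ∃ c : Fin k, c ∉ used := by
      by_contra h
      push_neg at h
      have : used = Finset.univ := Finset.eq_univ_iff_forall.mpr h
      rw [this, Finset.card_univ, Fintype.card_fin] at husedlt
      omega
    obtain ⟨c, hc⟩ := this
    refine ⟨c, fun f hfe hvf hfc => hc ?_⟩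
    exact Finset.mem_image.mpr ⟨f, Finset.mem_filter.mpr ⟨Finset.mem_univ _, hfe, hvf⟩, hfc⟩
  -- n is odd: n = 2 * a + 1
  have hodd : ∃ a : ℕ, 1 ≤ a ∧ n = 2 * a + 1 ∧ ∀ c : Fin k, a ≤ (Mc c).card := by
    obtain ⟨x, y, hxy, -⟩ := G.exists_ends e
    obtain ⟨c0, hc0⟩ := hmissex x
    have hx0 : x ∈ miss c0 := by simp [hmiss, hc0]
    have h1 : 1 ≤ (miss c0).card := Finset.card_pos.mpr ⟨x, hx0⟩
    have hn0 := hsplit c0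
    have hmle := hmissle c0
    have hn2 : 2 ≤ n := by rw [hn]; exact Fintype.one_lt_card_iff.mpr ⟨x, y, hxy⟩
    refine ⟨(Mc c0).card, by omega, by omega, fun c => ?_⟩
    have := hsplit c
    have := hmissle c
    omega
  obtain ⟨a, ha1, hna, hMca⟩ := hodd
  -- total edge count
  have hcount : k * a + 1 ≤ m := by
    have hsum : (Finset.univ.filter (fun f => f ≠ e)).card = ∑ c : Fin k, (Mc c).card := by
      rw [Finset.card_eq_sum_card_fiberwise (f := φ) (t := Finset.univ)
        (fun f _ => Finset.mem_univ _)]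
      refine Finset.sum_congr rfl (fun c _ => ?_)
      rw [Finset.filter_filter]
    have hcard : (Finset.univ.filter (fun f => f ≠ e)).card = m - 1 := by
      rw [Finset.filter_ne', Finset.card_erase_of_mem (Finset.mem_univ e), Finset.card_univ]
    have hge : k * a ≤ ∑ c : Fin k, (Mc c).card := by
      calc k * a = ∑ _c : Fin k, a := by simp [mul_comm]
        _ ≤ ∑ c : Fin k, (Mc c).card := Finset.sum_le_sum (fun c _ => hMca c)
    have hm1 : 1 ≤ m := by rw [hm]; exact Fintype.card_pos_iff.mpr ⟨e⟩
    omega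
  -- Step 4: fractional chromatic index > k
  have hlb : (k : ℝ) < G.fracChromaticIndex := by
    have hfrac : G.fracChromaticIndex = sInf T := rfl
    have hmain : ∀ x ∈ T, ((k * a + 1 : ℕ) : ℝ) ≤ (a : ℝ) * x := by
      rintro x ⟨w, hw, rfl⟩
      have hedge := hw.2.2
      have hm1 : ∑ M : Finset E, w M * (M.card : ℝ) = (m : ℝ) := by
        have hper : ∀ M : Finset E, w M * (M.card : ℝ)
            = ∑ f : E, (if f ∈ M then w M else 0) := by
          intro M
          rw [Finset.sum_ite_mem, Finset.univ_inter, Finset.sum_const, nsmul_eq_mul, mul_comm]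
        rw [Finset.sum_congr rfl (fun M _ => hper M), Finset.sum_comm,
          Finset.sum_congr rfl (fun f _ => hedge f)]
        simp [hm]
      have hterm : ∀ M : Finset E, w M * (M.card : ℝ) ≤ w M * (a : ℝ) := by
        intro M
        by_cases h0 : w M = 0
        · simp [h0]
        · have hmatch := hw.2.1 M h0
          have h2 := IsMatching.two_mul_card_le G hmatch
          rw [← hn] at h2
          have hcard : (M.card : ℝ) ≤ (a : ℝ) := by exact_mod_cast (by omega : M.card ≤ a)
          exact mul_le_mul_of_nonneg_left hcard (hw.1 M)
      calc ((k * a + 1 : ℕ) : ℝ) ≤ (m : ℝ) := by exact_mod_cast hcount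
        _ = ∑ M : Finset E, w M * (M.card : ℝ) := hm1.symm
        _ ≤ ∑ M : Finset E, w M * (a : ℝ) := Finset.sum_le_sum (fun M _ => hterm M)
        _ = (a : ℝ) * ∑ M : Finset E, w M := by rw [← Finset.sum_mul]; ring
    have ha0 : (0 : ℝ) < (a : ℝ) := by exact_mod_cast ha1
    have hge : ((k * a + 1 : ℕ) : ℝ) / (a : ℝ) ≤ G.fracChromaticIndex := by
      rw [hfrac]
      refine le_csInf hTne (fun x hx => ?_)
      rw [div_le_iff₀ ha0]
      have := hmain x hx
      linarith
    refine lt_of_lt_of_le ?_ hge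
    rw [lt_div_iff₀ ha0]
    push_cast
    nlinarith
  rw [hchi]
  have h1 : ⌈G.fracChromaticIndex⌉ ≤ (k : ℤ) + 1 := Int.ceil_le.mpr (by exact_mod_cast hub)
  have h2 : (k : ℤ) < ⌈G.fracChromaticIndex⌉ := Int.lt_ceil.mpr (by exact_mod_cast hlb)
  push_cast
  omega
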